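/- arXiv:2307.02060 — 3 statements merged into one kernel-verified Lean document; each statement's English description precedes it below -/
import Mathlib

section
/- For l > 0, the Melkumyan sparse kernel k_l : ℝ → ℝ (defined piecewise as in Equation (10)) is differentiable at d = l with derivative 0: the derivative of the formula ((2 + cos(2πd/l))/3)·(1 − d/l) + sin(2πd/l)/(2π) at d = l equals −(2 + cos 2π)/(3l) + (cos 2π)/l = −1/l + 1/l = 0, matching the derivative of the zero branch, so the truncated kernel is continuously differentiable across the support boundary d = l. -/
/-- The Melkumyan sparse kernel of Equation (10), with effective supportive
range `l`: the trigonometric formula on `d ≤ l` and `0` for `d > l`. -/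
noncomputable def melkumyanKernel (l : ℝ) (d : ℝ) : ℝ :=
  if d ≤ l then
    ((2 + Real.cos (2 * Real.pi * d / l)) / 3) * (1 - d / l) +
      Real.sin (2 * Real.pi * d / l) / (2 * Real.pi)
  else 0

/-- The Melkumyan sparse kernel is differentiable at the boundary `d = l` of its
support with derivative `0`, so the truncated kernel is continuously
differentiable across the support boundary. -/
theorem melkumyanKernel_hasDerivAt_boundary (l : ℝ) (hl : 0 < l) :
    HasDerivAt (melkumyanKernel l) 0 l := by
  have hl' : l ≠ 0 := ne_of_gt hl
  have hpi : Real.pi ≠ 0 := Real.pi_ne_zero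
  set f : ℝ → ℝ := fun d =>
    ((2 + Real.cos (2 * Real.pi * d / l)) / 3) * (1 - d / l) +
      Real.sin (2 * Real.pi * d / l) / (2 * Real.pi) with hf
  -- inner function
  have hg : HasDerivAt (fun d : ℝ => 2 * Real.pi * d / l) (2 * Real.pi / l) l := by
    simpa using ((hasDerivAt_id l).const_mul (2 * Real.pi)).div_const l
  have hgl : 2 * Real.pi * l / l = 2 * Real.pi := by field_simp
  have hcos : HasDerivAt (fun d : ℝ => Real.cos (2 * Real.pi * d / l))
      (-Real.sin (2 * Real.pi * l / l) * (2 * Real.pi / l)) l := hg.cos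
  have hsin : HasDerivAt (fun d : ℝ => Real.sin (2 * Real.pi * d / l))
      (Real.cos (2 * Real.pi * l / l) * (2 * Real.pi / l)) l := hg.sin
  have hlin : HasDerivAt (fun d : ℝ => 1 - d / l) (-(1 / l)) l := by
    simpa using ((hasDerivAt_id l).div_const l).const_sub (1 : ℝ)
  have h1 : HasDerivAt (fun d : ℝ => (2 + Real.cos (2 * Real.pi * d / l)) / 3)
      ((-Real.sin (2 * Real.pi * l / l) * (2 * Real.pi / l)) / 3) l :=
    by simpa using ((hasDerivAt_const l (2 : ℝ)).add hcos).div_const 3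
  have hfd : HasDerivAt f
      (((-Real.sin (2 * Real.pi * l / l) * (2 * Real.pi / l)) / 3) * (1 - l / l)
        + ((2 + Real.cos (2 * Real.pi * l / l)) / 3) * (-(1 / l))
        + (Real.cos (2 * Real.pi * l / l) * (2 * Real.pi / l)) / (2 * Real.pi)) l :=
    (h1.mul hlin).add (hsin.div_const (2 * Real.pi))
  have hderiv0 : HasDerivAt f 0 l := by
    convert hfd using 1
    rw [hgl, Real.sin_two_pi, Real.cos_two_pi]
    field_simp
    ring
  -- f equals kernel on Iic l
  have hIic : HasDerivWithinAt (melkumyanKernel l) 0 (Set.Iic l) l := by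
    refine (hderiv0.hasDerivWithinAt).congr (fun x hx => ?_) ?_
    · simp only [melkumyanKernel, if_pos (Set.mem_Iic.mp hx)]; rfl
    · simp [melkumyanKernel, f]
  have hfl0 : melkumyanKernel l l = 0 := by
    simp only [melkumyanKernel, if_pos le_rfl, hgl, Real.sin_two_pi, Real.cos_two_pi]
    field_simp
    ring
  have hIci : HasDerivWithinAt (melkumyanKernel l) 0 (Set.Ici l) l := by
    refine (hasDerivWithinAt_const l _ (0 : ℝ)).congr (fun x hx => ?_) (by simp [hfl0])
    rcases eq_or_lt_of_le (Set.mem_Ici.mp hx) with h | h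
    · rw [← h]; simpa using hfl0
    · simp [melkumyanKernel, not_le.mpr h]
  have := hIic.union hIci
  rw [Set.Iic_union_Ici] at this
  exact this.hasDerivAt (by simp)
end

section
/- For l > 0, the Melkumyan sparse kernel k_l is antitone (monotonically nonincreasing) on the interval [0, l]: for all 0 ≤ d₁ ≤ d₂ ≤ l, k_l(d₂) ≤ k_l(d₁). Consequently, grid cells closer to the target cell always receive at least as much weight in the BGK inference as cells farther away. -/
lemma aux_nonneg (u : ℝ) (h0 : 0 ≤ u) (h1 : u ≤ Real.pi) :
    0 ≤ (Real.pi - u) * Real.cos u + Real.sin u := by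
  rcases le_or_gt u (Real.pi / 2) with h | h
  · have hc : 0 ≤ Real.cos u := Real.cos_nonneg_of_mem_Icc ⟨by linarith [Real.pi_pos], h⟩
    have hs : 0 ≤ Real.sin u := Real.sin_nonneg_of_nonneg_of_le_pi h0 h1
    nlinarith
  · set v := Real.pi - u with hv
    have hu : u = Real.pi - v := by ring
    have hv0 : 0 ≤ v := by simp [hv]; linarith
    have hv2 : v < Real.pi / 2 := by simp [hv]; linarith
    rw [hu, Real.cos_pi_sub, Real.sin_pi_sub]
    rcases eq_or_lt_of_le hv0 with h0' | h0'
    · simp [← h0']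
    · have hc : 0 < Real.cos v := Real.cos_pos_of_mem_Ioo ⟨by linarith [Real.pi_pos], hv2⟩
      have ht : v < Real.tan v := Real.lt_tan h0' hv2
      rw [Real.tan_eq_sin_div_cos] at ht
      have : v * Real.cos v < Real.sin v := (lt_div_iff₀ hc).mp ht
      nlinarith

lemma hasDerivAt_mk (l : ℝ) (hl : 0 < l) (d : ℝ) :
    HasDerivAt (fun d => ((2 + Real.cos (2 * Real.pi * d / l)) / 3) * (1 - d / l) +
      Real.sin (2 * Real.pi * d / l) / (2 * Real.pi))
      (-(4 * Real.sin (Real.pi * d / l) / (3 * l)) *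
        ((Real.pi - Real.pi * d / l) * Real.cos (Real.pi * d / l) + Real.sin (Real.pi * d / l))) d := by
  have hk : HasDerivAt (fun d : ℝ => 2 * Real.pi * d / l) (2 * Real.pi / l) d := by
    simpa using ((hasDerivAt_id d).const_mul (2 * Real.pi)).div_const l
  have h1 := ((hk.cos.const_add 2).div_const 3).mul
    (((hasDerivAt_id d).div_const l).const_sub 1)
  have h2 := hk.sin.div_const (2 * Real.pi)
  have h := h1.add h2
  convert h using 1
  · rfl
  · rfl
  · rfl
  have hl' : l ≠ 0 := ne_of_gt hl
  have hpi : Real.pi ≠ 0 := Real.pi_ne_zero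
  have h2u : 2 * Real.pi * d / l = 2 * (Real.pi * d / l) := by ring
  rw [h2u, Real.sin_two_mul, Real.cos_two_mul']
  simp only [div_eq_mul_inv, id]
  field_simp
  linear_combination (-(2:ℝ) * l) * Real.sin_sq_add_cos_sq (Real.pi * d / l)

lemma f_antitone (l : ℝ) (hl : 0 < l) :
    AntitoneOn (fun d => ((2 + Real.cos (2 * Real.pi * d / l)) / 3) * (1 - d / l) +
      Real.sin (2 * Real.pi * d / l) / (2 * Real.pi)) (Set.Icc 0 l) := by
  apply antitoneOn_of_deriv_nonpos (convex_Icc 0 l)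
  · exact Continuous.continuousOn (by fun_prop)
  · intro x hx
    exact (hasDerivAt_mk l hl x).differentiableAt.differentiableWithinAt
  · intro x hx
    rw [interior_Icc] at hx
    rw [(hasDerivAt_mk l hl x).deriv]
    have hu0 : 0 ≤ Real.pi * x / l :=
      div_nonneg (mul_nonneg Real.pi_pos.le hx.1.le) hl.le
    have hu1 : Real.pi * x / l ≤ Real.pi := by
      rw [div_le_iff₀ hl]
      nlinarith [Real.pi_pos, hx.2]
    have hs : 0 ≤ Real.sin (Real.pi * x / l) :=
      Real.sin_nonneg_of_nonneg_of_le_pi hu0 hu1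
    have hb := aux_nonneg _ hu0 hu1
    have : 0 ≤ (4 * Real.sin (Real.pi * x / l) / (3 * l)) *
        ((Real.pi - Real.pi * x / l) * Real.cos (Real.pi * x / l) + Real.sin (Real.pi * x / l)) := by
      refine mul_nonneg (div_nonneg (by linarith) (by linarith)) hb
    linarith

/-- The Melkumyan sparse kernel is antitone (monotonically nonincreasing) on
`[0, l]`: closer grid cells always receive at least as much weight. -/
theorem melkumyanKernel_antitoneOn (l : ℝ) (hl : 0 < l) :
    AntitoneOn (melkumyanKernel l) (Set.Icc 0 l) := by
  intro a ha b hb hab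
  have ea : melkumyanKernel l a = _ := if_pos ha.2
  have eb : melkumyanKernel l b = _ := if_pos hb.2
  rw [ea, eb]
  exact f_antitone l hl ha hb hab
end

section
/- For l > 0 and every d ≥ 0, the Melkumyan sparse kernel satisfies 0 ≤ k_l(d) ≤ 1, i.e., the kernel is a valid weighting function taking values in [0, 1] on its entire domain. -/
section MelkumyanAux
open Real Set

lemma auxA : ∀ s ∈ Icc (0:ℝ) π, 0 ≤ Real.sin s - s * Real.cos s := by
  have hder : ∀ x : ℝ, HasDerivAt (fun s => Real.sin s - s * Real.cos s)
      (x * Real.sin x) x := by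
    intro x
    have h1 := Real.hasDerivAt_sin x
    have h2 : HasDerivAt (fun s : ℝ => s * Real.cos s)
        (1 * Real.cos x + x * (-Real.sin x)) x :=
      (hasDerivAt_id x).mul (Real.hasDerivAt_cos x)
    have := h1.sub h2
    exact this.congr_deriv (by ring)
  have hmono : MonotoneOn (fun s => Real.sin s - s * Real.cos s) (Icc 0 π) := by
    apply monotoneOn_of_deriv_nonneg (convex_Icc 0 π)
    · exact (Real.continuous_sin.sub (continuous_id.mul Real.continuous_cos)).continuousOn
    · intro x hx
      exact (hder x).differentiableAt.differentiableWithinAt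
    · intro x hx
      rw [interior_Icc] at hx
      rw [(hder x).deriv]
      exact mul_nonneg (le_of_lt hx.1) (Real.sin_nonneg_of_nonneg_of_le_pi hx.1.le hx.2.le)
  intro s hs
  have := hmono (left_mem_Icc.mpr Real.pi_pos.le) hs hs.1
  simpa using this

lemma auxB : ∀ s ∈ Icc (0:ℝ) π, 0 ≤ 2 - 2 * Real.cos s - s * Real.sin s := by
  have hder : ∀ x : ℝ, HasDerivAt (fun s => 2 - 2 * Real.cos s - s * Real.sin s)
      (Real.sin x - x * Real.cos x) x := by
    intro x
    have h1 : HasDerivAt (fun s : ℝ => 2 - 2 * Real.cos s) (0 - 2 * (-Real.sin x)) x :=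
      (hasDerivAt_const x 2).sub ((Real.hasDerivAt_cos x).const_mul 2)
    have h2 : HasDerivAt (fun s : ℝ => s * Real.sin s)
        (1 * Real.sin x + x * Real.cos x) x :=
      (hasDerivAt_id x).mul (Real.hasDerivAt_sin x)
    have := h1.sub h2
    exact this.congr_deriv (by ring)
  have hmono : MonotoneOn (fun s => 2 - 2 * Real.cos s - s * Real.sin s) (Icc 0 π) := by
    apply monotoneOn_of_deriv_nonneg (convex_Icc 0 π)
    · fun_prop
    · intro x hx
      exact (hder x).differentiableAt.differentiableWithinAt
    · intro x hx
      rw [interior_Icc] at hx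
      rw [(hder x).deriv]
      exact auxA x ⟨hx.1.le, hx.2.le⟩
  intro s hs
  have := hmono (left_mem_Icc.mpr Real.pi_pos.le) hs hs.1
  simpa using this

lemma auxC : ∀ s ∈ Icc (0:ℝ) π, 3 * Real.sin s ≤ s * (2 + Real.cos s) := by
  have hder : ∀ x : ℝ, HasDerivAt (fun s => s * (2 + Real.cos s) - 3 * Real.sin s)
      (2 - 2 * Real.cos x - x * Real.sin x) x := by
    intro x
    have h1 : HasDerivAt (fun s : ℝ => s * (2 + Real.cos s))
        (1 * (2 + Real.cos x) + x * (0 + -Real.sin x)) x :=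
      (hasDerivAt_id x).mul ((hasDerivAt_const x 2).add (Real.hasDerivAt_cos x))
    have h2 : HasDerivAt (fun s : ℝ => 3 * Real.sin s) (3 * Real.cos x) x :=
      (Real.hasDerivAt_sin x).const_mul 3
    have := h1.sub h2
    exact this.congr_deriv (by ring)
  have hmono : MonotoneOn (fun s => s * (2 + Real.cos s) - 3 * Real.sin s) (Icc 0 π) := by
    apply monotoneOn_of_deriv_nonneg (convex_Icc 0 π)
    · fun_prop
    · intro x hx
      exact (hder x).differentiableAt.differentiableWithinAt
    · intro x hx
      rw [interior_Icc] at hx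
      rw [(hder x).deriv]
      exact auxB x ⟨hx.1.le, hx.2.le⟩
  intro s hs
  have := hmono (left_mem_Icc.mpr Real.pi_pos.le) hs hs.1
  simp only [zero_mul, Real.sin_zero, Real.cos_zero, mul_zero, sub_zero] at this
  linarith [this]


/-- The Melkumyan sparse kernel is a valid weighting function: it takes values
in `[0, 1]` for every `d ≥ 0`. -/
theorem melkumyanKernel_mem_Icc (l : ℝ) (hl : 0 < l) (d : ℝ) (hd : 0 ≤ d) :
    0 ≤ melkumyanKernel l d ∧ melkumyanKernel l d ≤ 1 := by
  unfold melkumyanKernel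
  by_cases h : d ≤ l
  · simp only [if_pos h]
    have hpi := Real.pi_pos
    set x := d / l with hxdef
    have hx0 : 0 ≤ x := div_nonneg hd hl.le
    have hx1 : x ≤ 1 := (div_le_one hl).mpr h
    have harg : 2 * π * d / l = 2 * π * x := by rw [hxdef]; ring
    rw [harg]
    constructor
    · by_cases hx2 : x ≤ 1 / 2
      · have hs : 0 ≤ Real.sin (2 * π * x) :=
          Real.sin_nonneg_of_nonneg_of_le_pi (by positivity) (by nlinarith)
        have hc : -1 ≤ Real.cos (2 * π * x) := Real.neg_one_le_cos _
        have t1 : 0 ≤ (2 + Real.cos (2 * π * x)) / 3 * (1 - x) :=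
          mul_nonneg (by linarith) (by linarith)
        have t2 : 0 ≤ Real.sin (2 * π * x) / (2 * π) := div_nonneg hs (by positivity)
        linarith
      · set s := 2 * π * (1 - x) with hsdef
        have hs0 : 0 ≤ s := mul_nonneg (by positivity) (by linarith)
        have hsπ : s ≤ π := by rw [hsdef]; nlinarith
        have h2πx : 2 * π * x = 2 * π - s := by rw [hsdef]; ring
        have hcos : Real.cos (2 * π * x) = Real.cos s := by
          rw [h2πx, Real.cos_sub, Real.cos_two_pi, Real.sin_two_pi]; ring
        have hsin : Real.sin (2 * π * x) = -Real.sin s := by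
          rw [h2πx, Real.sin_sub, Real.cos_two_pi, Real.sin_two_pi]; ring
        rw [hcos, hsin]
        have key := auxC s ⟨hs0, hsπ⟩
        have h1x : 1 - x = s / (2 * π) := by
          rw [hsdef]; field_simp
        rw [h1x]
        have hrw : (2 + Real.cos s) / 3 * (s / (2 * π)) + -Real.sin s / (2 * π)
            = (s * (2 + Real.cos s) - 3 * Real.sin s) / (6 * π) := by
          field_simp; ring
        rw [hrw]
        exact div_nonneg (by linarith) (by positivity)
    · have hc : Real.cos (2 * π * x) ≤ 1 := Real.cos_le_one _
      have hs : Real.sin (2 * π * x) ≤ 2 * π * x := by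
        rcases eq_or_lt_of_le (show (0:ℝ) ≤ 2 * π * x by positivity) with h' | h'
        · simp [← h']
        · exact (Real.sin_lt h').le
      have t1 : (2 + Real.cos (2 * π * x)) / 3 * (1 - x) ≤ 1 * (1 - x) :=
        mul_le_mul_of_nonneg_right (by linarith) (by linarith)
      have t2 : Real.sin (2 * π * x) / (2 * π) ≤ x := by
        rw [div_le_iff₀ (by positivity)]; nlinarith
      linarith
  · simp only [if_neg h]
    norm_num

end MelkumyanAux
end
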